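/- Infinitesimal Cheng theorem, operator form: let α ∈ [0, π), and let S : (α, π) → End(V) be a differentiable path of self-adjoint operators on an n-dimensional real inner product space V, satisfying S' + S² + R = 0 with R(t) self-adjoint and trace R(t) ≥ n. Suppose either α = 0, or S extends continuously to α with largest eigenvalue of S(α) at most cot(α). Then S(t) = cot(t)·id and R(t) = id for all t ∈ (α, π). -/

import Mathlib

open Real Set Filter RealInnerProductSpace

/-- Trace of a continuous linear endomorphism. -/
noncomputable def clmTrace (n : ℕ)
    (A : EuclideanSpace ℝ (Fin n) →L[ℝ] EuclideanSpace ℝ (Fin n)) : ℝ :=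
  LinearMap.trace ℝ (EuclideanSpace ℝ (Fin n)) (A : EuclideanSpace ℝ (Fin n) →ₗ[ℝ] EuclideanSpace ℝ (Fin n))


lemma core_expand (n : ℕ) (a : Fin n → Fin n → ℝ) (c : ℝ) :
    ∑ i, ∑ j, (a i j - if i = j then c else 0)^2
      = (∑ i, ∑ j, a i j ^ 2) - 2 * c * (∑ i, a i i) + n * c ^ 2 := by
  have h : ∀ i : Fin n, ∑ j, (a i j - if i = j then c else 0)^2
      = (∑ j, a i j ^ 2) - 2 * c * a i i + c ^ 2 := by
    intro i
    have h1 : ∀ j : Fin n, (a i j - if i = j then c else 0)^2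
        = a i j ^ 2 - ((if i = j then 2 * c * a i j else 0) - (if i = j then c^2 else 0)) := by
      intro j; split <;> ring
    rw [Finset.sum_congr rfl fun j _ => h1 j, Finset.sum_sub_distrib, Finset.sum_sub_distrib]
    simp [Finset.sum_ite_eq]
    ring
  rw [Finset.sum_congr rfl fun i _ => h i]
  rw [Finset.sum_add_distrib, Finset.sum_sub_distrib, ← Finset.sum_sub_distrib]
  simp [Finset.mul_sum, Finset.sum_const, nsmul_eq_mul]
  try ring

lemma core_ineq (n : ℕ) (a : Fin n → Fin n → ℝ) :
    (∑ i, a i i) ^ 2 ≤ n * ∑ i, ∑ j, a i j ^ 2 := by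
  calc (∑ i, a i i) ^ 2 ≤ (Finset.univ.card : ℝ) * ∑ i, a i i ^ 2 := by
        exact_mod_cast sq_sum_le_card_mul_sum_sq (s := Finset.univ) (f := fun i => a i i)
    _ ≤ n * ∑ i, ∑ j, a i j ^ 2 := by
        rw [Finset.card_univ, Fintype.card_fin]
        apply mul_le_mul_of_nonneg_left _ (by positivity)
        apply Finset.sum_le_sum
        intro i _
        exact Finset.single_le_sum (f := fun j => a i j ^ 2) (fun j _ => sq_nonneg _) (Finset.mem_univ i)

lemma core_eq (n : ℕ) (hn : 0 < n) (a : Fin n → Fin n → ℝ)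
    (h : (n : ℝ) * (∑ i, ∑ j, a i j ^ 2) ≤ (∑ i, a i i) ^ 2) :
    ∀ i j, a i j = if i = j then (∑ k, a k k) / n else 0 := by
  set c : ℝ := (∑ k, a k k) / n with hc
  have hn' : (0:ℝ) < n := by exact_mod_cast hn
  have hT : ∑ k, a k k = n * c := by rw [hc]; field_simp
  have hE : ∑ i, ∑ j, (a i j - if i = j then c else 0)^2 ≤ 0 := by
    rw [core_expand n a c, hT]
    have h' : (n : ℝ) * (∑ i, ∑ j, a i j ^ 2) ≤ ((n:ℝ) * c)^2 := by rw [← hT]; exact h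
    nlinarith [h', hn']
  have hE0 : ∀ i ∈ Finset.univ, ∀ j ∈ Finset.univ, ((a i j - if i = j then c else 0)^2 : ℝ) = 0 := by
    have h1 := (Finset.sum_eq_zero_iff_of_nonneg (fun i _ => Finset.sum_nonneg fun j _ => sq_nonneg _)).1
      (le_antisymm hE (Finset.sum_nonneg fun i _ => Finset.sum_nonneg fun j _ => sq_nonneg _))
    intro i hi j hj
    exact (Finset.sum_eq_zero_iff_of_nonneg (fun j _ => sq_nonneg _)).1 (h1 i hi) j hj
  intro i j
  have := hE0 i (Finset.mem_univ i) j (Finset.mem_univ j)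
  have := pow_eq_zero_iff (n := 2) (by norm_num) |>.1 this
  linarith [sub_eq_zero.1 this]

lemma clmTrace_eq (n : ℕ) (T : EuclideanSpace ℝ (Fin n) →L[ℝ] EuclideanSpace ℝ (Fin n)) :
    clmTrace n T = ∑ i, T (EuclideanSpace.single i 1) i := by
  rw [clmTrace, LinearMap.trace_eq_matrix_trace ℝ (EuclideanSpace.basisFun (Fin n) ℝ).toBasis]
  simp [Matrix.trace, Matrix.diag, LinearMap.toMatrix_apply, EuclideanSpace.basisFun_apply,
    EuclideanSpace.basisFun_repr]

lemma apply_eq_sum (n : ℕ) (T : EuclideanSpace ℝ (Fin n) →L[ℝ] EuclideanSpace ℝ (Fin n))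
    (v : EuclideanSpace ℝ (Fin n)) (i : Fin n) :
    T v i = ∑ j, v j * T (EuclideanSpace.single j 1) i := by
  conv_lhs => rw [← (EuclideanSpace.basisFun (Fin n) ℝ).sum_repr v]
  rw [map_sum, WithLp.ofLp_sum, Finset.sum_apply]
  simp [EuclideanSpace.basisFun_apply, EuclideanSpace.basisFun_repr]

lemma entry_symm (n : ℕ) {T : EuclideanSpace ℝ (Fin n) →L[ℝ] EuclideanSpace ℝ (Fin n)}
    (h : IsSelfAdjoint T) (i j : Fin n) :
    T (EuclideanSpace.single j 1) i = T (EuclideanSpace.single i 1) j := by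
  have hsym := (ContinuousLinearMap.isSelfAdjoint_iff_isSymmetric.1 h)
  have h1 : T (EuclideanSpace.single j 1) i
      = ⟪T (EuclideanSpace.single j 1), EuclideanSpace.single i (1:ℝ)⟫ := by
    rw [EuclideanSpace.inner_single_right]; simp
  have h2 : T (EuclideanSpace.single i 1) j
      = ⟪EuclideanSpace.single j (1:ℝ), T (EuclideanSpace.single i 1)⟫ := by
    rw [EuclideanSpace.inner_single_left]; simp
  rw [h1, h2]
  exact hsym _ _

lemma clmTrace_comp_self (n : ℕ) {T : EuclideanSpace ℝ (Fin n) →L[ℝ] EuclideanSpace ℝ (Fin n)}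
    (h : IsSelfAdjoint T) :
    clmTrace n (T ∘L T) = ∑ i, ∑ j, (T (EuclideanSpace.single j 1) i) ^ 2 := by
  rw [clmTrace_eq]
  apply Finset.sum_congr rfl
  intro i _
  rw [ContinuousLinearMap.comp_apply, apply_eq_sum]
  apply Finset.sum_congr rfl
  intro j _
  rw [entry_symm n h i j, sq]

lemma trace_sq_le (n : ℕ) {T : EuclideanSpace ℝ (Fin n) →L[ℝ] EuclideanSpace ℝ (Fin n)}
    (h : IsSelfAdjoint T) :
    (clmTrace n T) ^ 2 ≤ n * clmTrace n (T ∘L T) := by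
  rw [clmTrace_comp_self n h, clmTrace_eq]
  exact core_ineq n (fun i j => T (EuclideanSpace.single j 1) i)

lemma trace_sq_eq (n : ℕ) (hn : 0 < n) {T : EuclideanSpace ℝ (Fin n) →L[ℝ] EuclideanSpace ℝ (Fin n)}
    (h : IsSelfAdjoint T)
    (heq : (n : ℝ) * clmTrace n (T ∘L T) ≤ (clmTrace n T) ^ 2) :
    T = (clmTrace n T / n) • ContinuousLinearMap.id ℝ (EuclideanSpace ℝ (Fin n)) := by
  have key := core_eq n hn (fun i j => T (EuclideanSpace.single j 1) i)
    (by rw [← clmTrace_comp_self n h, ← clmTrace_eq]; exact heq)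
  have htr : (∑ k, T (EuclideanSpace.single k 1) k) = clmTrace n T := (clmTrace_eq n T).symm
  have key' : ∀ i j, T (EuclideanSpace.single j 1) i = if i = j then clmTrace n T / n else 0 := by
    intro i j; have := key i j; simpa [htr] using this
  refine ContinuousLinearMap.ext fun v => ?_
  show T v = (clmTrace n T / n) • v
  refine PiLp.ext fun i => ?_
  rw [apply_eq_sum]
  calc ∑ j, v j * T (EuclideanSpace.single j 1) i
      = ∑ j, v j * (if i = j then (clmTrace n T) / n else 0) := by
        apply Finset.sum_congr rfl; intro j _; rw [key' i j]
    _ = (clmTrace n T / n) * v i := by simp [Finset.sum_ite_eq, mul_comm]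
    _ = ((clmTrace n T / n) • v) i := rfl

noncomputable def traceCLM (n : ℕ) :
    (EuclideanSpace ℝ (Fin n) →L[ℝ] EuclideanSpace ℝ (Fin n)) →L[ℝ] ℝ :=
  LinearMap.toContinuousLinearMap
    ((LinearMap.trace ℝ (EuclideanSpace ℝ (Fin n))).comp (ContinuousLinearMap.coeLM ℝ))

lemma traceCLM_apply (n : ℕ) (A : EuclideanSpace ℝ (Fin n) →L[ℝ] EuclideanSpace ℝ (Fin n)) :
    traceCLM n A = clmTrace n A := rfl

lemma clmTrace_hasDerivAt (n : ℕ) {S : ℝ → EuclideanSpace ℝ (Fin n) →L[ℝ] EuclideanSpace ℝ (Fin n)}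
    {S' : EuclideanSpace ℝ (Fin n) →L[ℝ] EuclideanSpace ℝ (Fin n)} {t : ℝ}
    (h : HasDerivAt S S' t) :
    HasDerivAt (fun u => clmTrace n (S u)) (clmTrace n S') t := by
  have := (traceCLM n).hasFDerivAt.comp_hasDerivAt t h
  exact this

lemma clmTrace_add (n : ℕ) (A B : EuclideanSpace ℝ (Fin n) →L[ℝ] EuclideanSpace ℝ (Fin n)) :
    clmTrace n (A + B) = clmTrace n A + clmTrace n B := by
  simp [clmTrace]

lemma clmTrace_zero (n : ℕ) : clmTrace n (0 : EuclideanSpace ℝ (Fin n) →L[ℝ] EuclideanSpace ℝ (Fin n)) = 0 := by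
  simp [clmTrace]

lemma hasDerivAt_cot {t : ℝ} (h : Real.sin t ≠ 0) :
    HasDerivAt Real.cot (-(1 / Real.sin t ^ 2)) t := by
  have hcot : Real.cot = fun u => Real.cos u / Real.sin u := funext fun u => Real.cot_eq_cos_div_sin u
  rw [hcot]
  have := (Real.hasDerivAt_cos t).div (Real.hasDerivAt_sin t) h
  refine this.congr_deriv ?_
  have h2 := Real.sin_sq_add_cos_sq t
  field_simp
  ring_nf
  nlinarith [h2]

lemma antitoneOn_Ioo_of_hasDerivAt {f f' : ℝ → ℝ} {a b : ℝ}
    (hd : ∀ x ∈ Ioo a b, HasDerivAt f (f' x) x) (h0 : ∀ x ∈ Ioo a b, f' x ≤ 0) :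
    AntitoneOn f (Ioo a b) := by
  apply antitoneOn_of_deriv_nonpos (convex_Ioo a b)
  · intro x hx; exact (hd x hx).continuousAt.continuousWithinAt
  · rw [interior_Ioo]; intro x hx; exact ((hd x hx).differentiableAt).differentiableWithinAt
  · rw [interior_Ioo]; intro x hx; rw [(hd x hx).deriv]; exact h0 x hx

lemma tendsto_cot_zero : Tendsto Real.cot (nhdsWithin 0 (Set.Ioi 0)) atTop := by
  have hsin : Tendsto Real.sin (nhdsWithin 0 (Set.Ioi 0)) (nhdsWithin 0 (Set.Ioi 0)) := by
    rw [tendsto_nhdsWithin_iff]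
    constructor
    · have := Real.continuous_sin.tendsto 0
      simp only [Real.sin_zero] at this
      exact this.mono_left nhdsWithin_le_nhds
    · filter_upwards [Ioo_mem_nhdsGT (by constructor <;> [rfl; exact Real.pi_pos] : (0:ℝ) ∈ Ico 0 π).2] with x hx
      exact Real.sin_pos_of_pos_of_lt_pi hx.1 hx.2
  have hinv : Tendsto (fun x => (Real.sin x)⁻¹) (nhdsWithin 0 (Set.Ioi 0)) atTop :=
    tendsto_inv_nhdsGT_zero.comp hsin
  have hcos : Tendsto Real.cos (nhdsWithin 0 (Set.Ioi 0)) (nhds 1) := by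
    have := Real.continuous_cos.tendsto 0
    simp only [Real.cos_zero] at this
    exact this.mono_left nhdsWithin_le_nhds
  have := Filter.Tendsto.pos_mul_atTop one_pos hcos hinv
  refine this.congr fun x => ?_
  rw [Real.cot_eq_cos_div_sin, div_eq_mul_inv]

lemma tendsto_cot_pi : Tendsto Real.cot (nhdsWithin π (Set.Iio π)) atBot := by
  have hsin : Tendsto Real.sin (nhdsWithin π (Set.Iio π)) (nhdsWithin 0 (Set.Ioi 0)) := by
    rw [tendsto_nhdsWithin_iff]
    constructor
    · have := Real.continuous_sin.tendsto π
      simp only [Real.sin_pi] at this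
      exact this.mono_left nhdsWithin_le_nhds
    · filter_upwards [Ioo_mem_nhdsLT_of_mem (by constructor <;> [exact Real.pi_pos; rfl] : π ∈ Ioc 0 π)] with x hx
      exact Real.sin_pos_of_pos_of_lt_pi hx.1 hx.2
  have hinv : Tendsto (fun x => (Real.sin x)⁻¹) (nhdsWithin π (Set.Iio π)) atTop :=
    tendsto_inv_nhdsGT_zero.comp hsin
  have hcos : Tendsto Real.cos (nhdsWithin π (Set.Iio π)) (nhds (-1)) := by
    have := Real.continuous_cos.tendsto π
    simp only [Real.cos_pi] at this
    exact this.mono_left nhdsWithin_le_nhds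
  have := hcos.neg_mul_atTop (by norm_num) hinv
  refine this.congr fun x => ?_
  rw [Real.cot_eq_cos_div_sin, div_eq_mul_inv]

lemma scalar_aux1 {N d s q r : ℝ} (hN : 0 < N) (h1 : (N*s)^2 ≤ N*q) (h2 : N ≤ r)
    (h3 : N*d + q + r = 0) : d + s^2 + 1 ≤ 0 := by
  have h5 : N * s^2 ≤ q := le_of_mul_le_mul_left (by nlinarith) hN
  have h6 : N * (d + s^2 + 1) ≤ 0 := by nlinarith
  nlinarith

lemma scalar_aux2 (d G c S C : ℝ)
    (hiq3 : (d + (G + c)^2 + 1) * S^2 ≤ 0)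
    (hcsc : (1/S^2) * S^2 = 1)
    (hpyth : S^2 + C^2 = 1)
    (hcot2 : c^2 * S^2 = C^2)
    (hcross : G * c * S^2 = G * C * S) :
    (d + 1/S^2) * S^2 + G * (2 * S * C) ≤ -(G^2 * S^2) := by
  nlinarith [hiq3, hcsc, hpyth, hcot2, hcross]


set_option maxHeartbeats 1000000 in
/-- Infinitesimal Cheng theorem, operator form: a self-adjoint solution of
`S' + S² + R = 0` on `(α, π)` with `R` self-adjoint, `trace R ≥ n`, and (when `α ≠ 0`)
continuous boundary value at `α` whose largest eigenvalue is at most `cot α`, must be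
`cot t • id`, with `R ≡ id`. -/
theorem stmt_9 (n : ℕ) (hn : 1 ≤ n) (α : ℝ) (hα : α ∈ Set.Ico 0 π)
    (S S' R : ℝ → EuclideanSpace ℝ (Fin n) →L[ℝ] EuclideanSpace ℝ (Fin n))
    (hS : ∀ t ∈ Set.Ioo α π, HasDerivAt S (S' t) t)
    (hsa : ∀ t ∈ Set.Ioo α π, IsSelfAdjoint (S t))
    (hRsa : ∀ t ∈ Set.Ioo α π, IsSelfAdjoint (R t))
    (htrR : ∀ t ∈ Set.Ioo α π, (n : ℝ) ≤ clmTrace n (R t))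
    (hric : ∀ t ∈ Set.Ioo α π, S' t + S t ∘L S t + R t = 0)
    (hbd : α = 0 ∨ ∃ Sα : EuclideanSpace ℝ (Fin n) →L[ℝ] EuclideanSpace ℝ (Fin n),
      Filter.Tendsto S (nhdsWithin α (Set.Ioi α)) (nhds Sα) ∧
      ∀ v : EuclideanSpace ℝ (Fin n), ⟪Sα v, v⟫ ≤ Real.cot α * ‖v‖ ^ 2) :
    ∀ t ∈ Set.Ioo α π,
      S t = Real.cot t • ContinuousLinearMap.id ℝ (EuclideanSpace ℝ (Fin n)) ∧
      R t = ContinuousLinearMap.id ℝ (EuclideanSpace ℝ (Fin n)) := by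
  have hn0 : (0:ℝ) < n := by exact_mod_cast Nat.lt_of_lt_of_le Nat.zero_lt_one hn
  have hsinpos : ∀ u ∈ Set.Ioo α π, 0 < Real.sin u := fun u hu =>
    Real.sin_pos_of_pos_of_lt_pi (lt_of_le_of_lt hα.1 hu.1) hu.2
  set s : ℝ → ℝ := fun u => clmTrace n (S u) / n with hs_def
  set ds : ℝ → ℝ := fun u => clmTrace n (S' u) / n with hds_def
  have hsdiff : ∀ u ∈ Set.Ioo α π, HasDerivAt s (ds u) u := fun u hu =>
    (clmTrace_hasDerivAt n (hS u hu)).div_const n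
  -- trace of the Riccati equation
  have htr0 : ∀ u ∈ Set.Ioo α π,
      clmTrace n (S' u) + clmTrace n (S u ∘L S u) + clmTrace n (R u) = 0 := by
    intro u hu
    have := congrArg (clmTrace n) (hric u hu)
    rwa [clmTrace_add, clmTrace_add, clmTrace_zero] at this
  have hineq : ∀ u ∈ Set.Ioo α π, ds u + (s u)^2 + 1 ≤ 0 := by
    intro u hu
    have h1 := trace_sq_le n (hsa u hu)
    have h2 := htrR u hu
    have h3 := htr0 u hu
    have hs_eq : clmTrace n (S u) = n * s u := by simp only [hs_def]; field_simp
    have hds_eq : clmTrace n (S' u) = n * ds u := by simp only [hds_def]; field_simp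
    refine scalar_aux1 (q := clmTrace n (S u ∘L S u)) hn0 ?_ h2 ?_
    · rw [← hs_eq]; exact h1
    · rw [← hds_eq]; exact h3
  -- the auxiliary function φ
  set g : ℝ → ℝ := fun u => s u - Real.cot u with hg_def
  set φ : ℝ → ℝ := fun u => g u * Real.sin u ^ 2 with hφ_def
  set Dφ : ℝ → ℝ := fun u =>
    (ds u + 1 / Real.sin u ^ 2) * Real.sin u ^ 2 + g u * (2 * Real.sin u * Real.cos u)
    with hDφ_def
  have hφd : ∀ u ∈ Set.Ioo α π, HasDerivAt φ (Dφ u) u := by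
    intro u hu
    have hsin := (hsinpos u hu).ne'
    have h1 : HasDerivAt g (ds u + 1 / Real.sin u ^ 2) u := by
      have := (hsdiff u hu).sub (hasDerivAt_cot hsin)
      exact this.congr_deriv (by ring)
    have h2 : HasDerivAt (fun x => Real.sin x ^ 2) (2 * Real.sin u * Real.cos u) u := by
      have := (Real.hasDerivAt_sin u).pow 2
      exact this.congr_deriv (by norm_num)
    exact h1.mul h2
  have hDφle : ∀ u ∈ Set.Ioo α π, Dφ u ≤ -((g u)^2 * Real.sin u ^ 2) := by
    intro u hu
    have hsin := (hsinpos u hu).ne'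
    have hcot : Real.cot u * Real.sin u = Real.cos u := by
      rw [Real.cot_eq_cos_div_sin]; field_simp
    have hcsc : (1 / Real.sin u ^ 2) * Real.sin u ^ 2 = 1 := by field_simp
    have hpyth := Real.sin_sq_add_cos_sq u
    have hiq := hineq u hu
    have hg_eq : s u = g u + Real.cot u := by simp [hg_def]
    have hiq2 : (ds u + (s u)^2 + 1) * Real.sin u ^ 2 ≤ 0 :=
      mul_nonpos_of_nonpos_of_nonneg hiq (sq_nonneg _)
    have hiq3 : (ds u + (g u + Real.cot u)^2 + 1) * Real.sin u ^ 2 ≤ 0 := by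
      rw [← hg_eq]; exact hiq2
    have hcot2 : (Real.cot u)^2 * Real.sin u ^2 = Real.cos u ^2 := by
      linear_combination (Real.cot u * Real.sin u + Real.cos u) * hcot
    have hcross : g u * Real.cot u * Real.sin u ^2 = g u * Real.cos u * Real.sin u := by
      linear_combination (g u * Real.sin u) * hcot
    simp only [hDφ_def]
    exact scalar_aux2 (ds u) (g u) (Real.cot u) (Real.sin u) (Real.cos u) hiq3 hcsc hpyth hcot2 hcross
  have hφ_anti : AntitoneOn φ (Set.Ioo α π) :=
    antitoneOn_Ioo_of_hasDerivAt hφd (fun u hu =>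
      le_trans (hDφle u hu) (neg_nonpos.2 (by positivity)))
  -- the comparison function χ = -φ⁻¹ - cot is antitone wherever φ ≠ 0
  have hχ : ∀ a b : ℝ, α ≤ a → b ≤ π → (∀ u ∈ Set.Ioo a b, φ u ≠ 0) →
      AntitoneOn (fun u => -(φ u)⁻¹ - Real.cot u) (Set.Ioo a b) := by
    intro a b ha hb hne
    have hsub : Set.Ioo a b ⊆ Set.Ioo α π := Set.Ioo_subset_Ioo ha hb
    apply antitoneOn_Ioo_of_hasDerivAt
      (f' := fun u => Dφ u / (φ u)^2 + 1 / Real.sin u ^ 2)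
    · intro u hu
      have hsin := (hsinpos u (hsub hu)).ne'
      have h1 : HasDerivAt (fun x => -(φ x)⁻¹) (Dφ u / (φ u)^2) u := by
        have := ((hφd u (hsub hu)).inv (hne u hu)).neg
        exact this.congr_deriv (by ring)
      have := h1.sub (hasDerivAt_cot hsin)
      exact this.congr_deriv (by beta_reduce; ring)
    · intro u hu
      have hsin := (hsinpos u (hsub hu)).ne'
      have hg : g u ≠ 0 := by
        intro h0
        apply hne u hu
        simp [hφ_def, h0]
      have hφsqpos : 0 < (φ u)^2 := by positivity
      have hstep : Dφ u / (φ u)^2 ≤ (-((g u)^2 * Real.sin u ^2)) / (φ u)^2 :=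
        (div_le_div_iff_of_pos_right hφsqpos).2 (hDφle u (hsub hu))
      have hval : (-((g u)^2 * Real.sin u ^2)) / (φ u)^2 = -(1 / Real.sin u ^2) := by
        have hφval : φ u = g u * Real.sin u ^ 2 := rfl
        rw [hφval]
        field_simp
      rw [hval] at hstep
      linarith
  -- Claim B : φ is nonnegative
  have claimB : ∀ t ∈ Set.Ioo α π, 0 ≤ φ t := by
    by_contra hc
    push_neg at hc
    obtain ⟨t₀, ht₀, hφt₀⟩ := hc
    set v := (t₀ + π)/2 with hv_def
    have hvt : t₀ < v := by simp only [hv_def]; linarith [ht₀.2]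
    have hvπ : v < π := by simp only [hv_def]; linarith [ht₀.2]
    have hv : v ∈ Set.Ioo α π := ⟨lt_trans ht₀.1 hvt, hvπ⟩
    have hφneg : ∀ u ∈ Set.Ioo t₀ π, φ u ≤ φ t₀ := fun u hu =>
      hφ_anti ht₀ ⟨lt_trans ht₀.1 hu.1, hu.2⟩ hu.1.le
    have hanti := hχ t₀ π ht₀.1.le le_rfl
      (fun u hu => ne_of_lt (lt_of_le_of_lt (hφneg u hu) hφt₀))
    have hkey : ∀ u ∈ Set.Ioo v π, (φ t₀)⁻¹ + Real.cot v ≤ Real.cot u := by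
      intro u hu
      have hu' : u ∈ Set.Ioo t₀ π := ⟨lt_trans hvt hu.1, hu.2⟩
      have hv' : v ∈ Set.Ioo t₀ π := ⟨hvt, hvπ⟩
      have hχle := hanti hv' hu' hu.1.le
      simp only at hχle
      have hφu : φ u < 0 := lt_of_le_of_lt (hφneg u hu') hφt₀
      have hinv1 : (φ u)⁻¹ < 0 := inv_lt_zero.2 hφu
      have hinv2 : (φ t₀)⁻¹ ≤ (φ v)⁻¹ :=
        (inv_le_inv_of_neg hφt₀ (lt_of_le_of_lt (hφneg v hv') hφt₀)).2 (hφneg v hv')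
      linarith
    obtain ⟨u, hu1, hu2⟩ := ((tendsto_cot_pi.eventually
        (eventually_lt_atBot ((φ t₀)⁻¹ + Real.cot v))).and
        (Ioo_mem_nhdsLT_of_mem (⟨hvπ, le_rfl⟩ : π ∈ Set.Ioc v π))).exists
    exact absurd (hkey u hu2) (not_le.2 hu1)
  -- Claim A : φ is nonpositive
  have claimA : ∀ t ∈ Set.Ioo α π, φ t ≤ 0 := by
    rcases hbd with hα0 | ⟨Sα, hTend, hbound⟩
    · -- α = 0 : blow-up argument at the left end
      subst hα0
      by_contra hc
      push_neg at hc
      obtain ⟨t₀, ht₀, hφt₀⟩ := hc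
      set v := t₀/2 with hv_def
      have hvt : v < t₀ := by simp only [hv_def]; linarith [ht₀.1]
      have hv0 : 0 < v := by simp only [hv_def]; linarith [ht₀.1]
      have hφpos : ∀ u ∈ Set.Ioo (0:ℝ) t₀, φ t₀ ≤ φ u := fun u hu =>
        hφ_anti ⟨hu.1, lt_trans hu.2 ht₀.2⟩ ht₀ hu.2.le
      have hanti := hχ 0 t₀ le_rfl ht₀.2.le
        (fun u hu => ne_of_gt (lt_of_lt_of_le hφt₀ (hφpos u hu)))
      have hkey : ∀ u ∈ Set.Ioo (0:ℝ) v, Real.cot u ≤ (φ t₀)⁻¹ + Real.cot v := by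
        intro u hu
        have hu' : u ∈ Set.Ioo (0:ℝ) t₀ := ⟨hu.1, lt_trans hu.2 hvt⟩
        have hv' : v ∈ Set.Ioo (0:ℝ) t₀ := ⟨hv0, hvt⟩
        have hχge := hanti hu' hv' hu.2.le
        simp only at hχge
        have hφu : 0 < φ u := lt_of_lt_of_le hφt₀ (hφpos u hu')
        have hinv1 : 0 < (φ u)⁻¹ := inv_pos.2 hφu
        have hinv2 : (φ v)⁻¹ ≤ (φ t₀)⁻¹ :=
          inv_anti₀ hφt₀ (hφpos v hv')
        linarith
      obtain ⟨u, hu1, hu2⟩ := ((tendsto_cot_zero.eventually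
          (eventually_gt_atTop ((φ t₀)⁻¹ + Real.cot v))).and
          (Ioo_mem_nhdsGT (⟨le_rfl, hv0⟩ : (0:ℝ) ∈ Set.Ico 0 v).2)).exists
      exact absurd (hkey u hu2) (not_le.2 hu1)
    · -- boundary-value case
      have hsα : clmTrace n Sα ≤ n * Real.cot α := by
        rw [clmTrace_eq]
        have hterm : ∀ i : Fin n, Sα (EuclideanSpace.single i 1) i ≤ Real.cot α := by
          intro i
          have h1 : Sα (EuclideanSpace.single i 1) i
              = ⟪Sα (EuclideanSpace.single i 1), EuclideanSpace.single i (1:ℝ)⟫ := by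
            rw [EuclideanSpace.inner_single_right]; simp
          have h2 := hbound (EuclideanSpace.single i 1)
          rw [EuclideanSpace.norm_single] at h2
          rw [h1]; simpa using h2
        calc (∑ i, Sα (EuclideanSpace.single i 1) i) ≤ ∑ _i : Fin n, Real.cot α :=
              Finset.sum_le_sum fun i _ => hterm i
          _ = n * Real.cot α := by simp [Finset.sum_const, nsmul_eq_mul]
      set L : ℝ := (clmTrace n Sα / n) * Real.sin α ^ 2 - Real.sin α * Real.cos α with hL_def
      have hφlim : Tendsto φ (nhdsWithin α (Set.Ioi α)) (nhds L) := by
        have hstr : Tendsto (fun u => clmTrace n (S u) / n) (nhdsWithin α (Set.Ioi α))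
            (nhds (clmTrace n Sα / n)) :=
          (((traceCLM n).continuous.tendsto Sα).comp hTend).div_const n
        have hsin2 : Tendsto (fun u => Real.sin u ^ 2) (nhdsWithin α (Set.Ioi α))
            (nhds (Real.sin α ^ 2)) :=
          ((Real.continuous_sin.pow 2).tendsto α).mono_left nhdsWithin_le_nhds
        have hsc : Tendsto (fun u => Real.sin u * Real.cos u) (nhdsWithin α (Set.Ioi α))
            (nhds (Real.sin α * Real.cos α)) :=
          ((Real.continuous_sin.mul Real.continuous_cos).tendsto α).mono_left nhdsWithin_le_nhds
        have hlim0 : Tendsto (fun u => (clmTrace n (S u) / n) * Real.sin u ^ 2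
            - Real.sin u * Real.cos u) (nhdsWithin α (Set.Ioi α)) (nhds L) := by
          rw [hL_def]; exact (hstr.mul hsin2).sub hsc
        apply hlim0.congr'
        filter_upwards [Ioo_mem_nhdsGT (⟨le_rfl, hα.2⟩ : α ∈ Set.Ico α π).2] with u hu
        have hsin := (hsinpos u hu).ne'
        have hcot : Real.cot u * Real.sin u = Real.cos u := by
          rw [Real.cot_eq_cos_div_sin]; field_simp
        show (clmTrace n (S u) / n) * Real.sin u ^2 - Real.sin u * Real.cos u = φ u
        have hφval : φ u = (s u - Real.cot u) * Real.sin u ^ 2 := rfl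
        rw [hφval, hs_def]
        simp only
        linear_combination Real.sin u * hcot
      have hL0 : L ≤ 0 := by
        rcases eq_or_ne (Real.sin α) 0 with hsα0 | hsα0
        · rw [hL_def, hsα0]; ring_nf; rfl
        · have hsαpos : 0 < Real.sin α :=
            Real.sin_pos_of_pos_of_lt_pi (lt_of_le_of_ne hα.1 (by
              intro h; apply hsα0; rw [← h, Real.sin_zero])) hα.2
          have hcotα : Real.cot α * Real.sin α = Real.cos α := by
            rw [Real.cot_eq_cos_div_sin]; field_simp
          have hsle : clmTrace n Sα / n ≤ Real.cot α := by
            rw [div_le_iff₀ hn0]; linarith [hsα]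
          rw [hL_def]
          nlinarith [hsle, sq_nonneg (Real.sin α), hcotα, hsαpos]
      intro t ht
      have hev : ∀ᶠ u in nhdsWithin α (Set.Ioi α), φ t ≤ φ u := by
        filter_upwards [Ioo_mem_nhdsGT (⟨le_rfl, ht.1⟩ : α ∈ Set.Ico α t).2] with u hu
        exact hφ_anti ⟨hu.1, lt_trans hu.2 ht.2⟩ ht hu.2.le
      have := ge_of_tendsto hφlim hev
      linarith
  -- φ vanishes identically, hence s = cot
  have hs_cot : ∀ u ∈ Set.Ioo α π, s u = Real.cot u := by
    intro u hu
    have h0 : φ u = 0 := le_antisymm (claimA u hu) (claimB u hu)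
    have hsin := (hsinpos u hu).ne'
    have hφval : φ u = (s u - Real.cot u) * Real.sin u ^ 2 := rfl
    rw [hφval] at h0
    have := mul_eq_zero.1 h0
    rcases this with h | h
    · linarith [sub_eq_zero.1 h]
    · exact absurd h (pow_ne_zero 2 hsin)
  have hnn : 0 < n := Nat.lt_of_lt_of_le Nat.zero_lt_one hn
  -- identify the derivative of s, hence the traces, hence S
  have hS_id : ∀ u ∈ Set.Ioo α π,
      S u = Real.cot u • ContinuousLinearMap.id ℝ (EuclideanSpace ℝ (Fin n)) := by
    intro u hu
    have hsin := (hsinpos u hu).ne'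
    have hcsc : 1 / Real.sin u ^ 2 = Real.cot u ^ 2 + 1 := by
      have hpyth := Real.sin_sq_add_cos_sq u
      rw [Real.cot_eq_cos_div_sin, div_pow]
      field_simp
      try linarith
    have hsev : s =ᶠ[nhds u] Real.cot :=
      Filter.eventuallyEq_of_mem (isOpen_Ioo.mem_nhds hu) hs_cot
    have hds_val : ds u = -(1 / Real.sin u ^ 2) :=
      HasDerivAt.unique (hsdiff u hu) ((hasDerivAt_cot hsin).congr_of_eventuallyEq hsev)
    have hds_eq : clmTrace n (S' u) = n * ds u := by simp only [hds_def]; field_simp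
    have hs_eq : clmTrace n (S u) = n * Real.cot u := by
      have : clmTrace n (S u) = n * s u := by simp only [hs_def]; field_simp
      rw [this, hs_cot u hu]
    have h3 := htr0 u hu
    have h2 := htrR u hu
    have h1 := trace_sq_le n (hsa u hu)
    have h1' : ((n:ℝ) * Real.cot u)^2 ≤ (n:ℝ) * clmTrace n (S u ∘L S u) := by
      rw [← hs_eq]; exact h1
    have htrS' : clmTrace n (S' u) = -((n:ℝ) * (Real.cot u ^2 + 1)) := by
      rw [hds_eq, hds_val, hcsc]; ring
    -- equality of traces
    have heq : (n:ℝ) * clmTrace n (S u ∘L S u) ≤ (clmTrace n (S u))^2 := by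
      rw [hs_eq]
      nlinarith [h1', h2, h3, htrS', hn0]
    have hfin := trace_sq_eq n hnn (hsa u hu) heq
    rw [hfin, hs_eq]
    congr 1
    field_simp
  refine fun t ht => ⟨hS_id t ht, ?_⟩
  have hsin := (hsinpos t ht).ne'
  have hcsc : 1 / Real.sin t ^ 2 = Real.cot t ^ 2 + 1 := by
    have hpyth := Real.sin_sq_add_cos_sq t
    rw [Real.cot_eq_cos_div_sin, div_pow]
    field_simp
    try linarith
  -- identify S' t
  have hSev : S =ᶠ[nhds t]
      (fun u => Real.cot u • ContinuousLinearMap.id ℝ (EuclideanSpace ℝ (Fin n))) :=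
    Filter.eventuallyEq_of_mem (isOpen_Ioo.mem_nhds ht) hS_id
  have hS'val : S' t = (-(1 / Real.sin t ^ 2)) • ContinuousLinearMap.id ℝ (EuclideanSpace ℝ (Fin n)) :=
    HasDerivAt.unique (hS t ht)
      (((hasDerivAt_cot hsin).smul_const (ContinuousLinearMap.id ℝ (EuclideanSpace ℝ (Fin n)))).congr_of_eventuallyEq hSev)
  have hRval : R t = -(S' t + S t ∘L S t) := eq_neg_of_add_eq_zero_right (hric t ht)
  have hcomp : (Real.cot t • ContinuousLinearMap.id ℝ (EuclideanSpace ℝ (Fin n))) ∘L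
      (Real.cot t • ContinuousLinearMap.id ℝ (EuclideanSpace ℝ (Fin n)))
      = (Real.cot t * Real.cot t) • ContinuousLinearMap.id ℝ (EuclideanSpace ℝ (Fin n)) := by
    ext v
    simp [smul_smul]
  have hone : -(1 / Real.sin t ^ 2) + Real.cot t * Real.cot t = -1 := by
    rw [hcsc]; ring
  rw [hRval, hS'val, hS_id t ht, hcomp]
  refine ContinuousLinearMap.ext fun v => ?_
  simp only [ContinuousLinearMap.neg_apply, ContinuousLinearMap.add_apply,
    ContinuousLinearMap.smul_apply, ContinuousLinearMap.id_apply]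
  rw [← add_smul, hone]
  simp
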